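/- Define g(α,γ) = 4α − 4α³ − √(1−α²)·(γ−2)² + 8α²·√(1−α²)·γ(γ−1)(α²−1). For every fixed α ∈ [0,1], the partial derivative ∂g/∂γ = √(1−α²)·[4 − 2γ + 8α²(α²−1)(2γ−1)] is nonnegative for all γ ∈ [0, 0.4]; hence g(α,·) is nondecreasing on [0,0.4] and g(α,γ) ≤ g(α,0.4) for all γ ∈ [0,0.4]. -/

import Mathlib

/-- Monotonicity in `γ` of the factor `g(α,γ)` from the fidelity-increase expression:
its `γ`-derivative `√(1−α²)·[4 − 2γ + 8α²(α²−1)(2γ−1)]` is nonnegative on `[0, 0.4]`,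
so `g(α,·)` is nondecreasing there and bounded by its value at `γ = 0.4`. -/
theorem stmt_9 :
    let g : ℝ → ℝ → ℝ := fun α γ =>
      4 * α - 4 * α ^ 3 - Real.sqrt (1 - α ^ 2) * (γ - 2) ^ 2 +
        8 * α ^ 2 * Real.sqrt (1 - α ^ 2) * γ * (γ - 1) * (α ^ 2 - 1)
    ∀ α ∈ Set.Icc (0 : ℝ) 1,
      (∀ γ ∈ Set.Icc (0 : ℝ) 0.4,
          HasDerivAt (g α)
            (Real.sqrt (1 - α ^ 2) * (4 - 2 * γ + 8 * α ^ 2 * (α ^ 2 - 1) * (2 * γ - 1))) γ ∧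
          0 ≤ Real.sqrt (1 - α ^ 2) * (4 - 2 * γ + 8 * α ^ 2 * (α ^ 2 - 1) * (2 * γ - 1))) ∧
      MonotoneOn (g α) (Set.Icc (0 : ℝ) 0.4) ∧
      ∀ γ ∈ Set.Icc (0 : ℝ) 0.4, g α γ ≤ g α 0.4 := by
  intro g α hα
  obtain ⟨hα0, hα1⟩ := hα
  set s := Real.sqrt (1 - α ^ 2) with hs
  have hsnn : 0 ≤ s := Real.sqrt_nonneg _
  have hd : ∀ γ : ℝ, HasDerivAt (g α)
      (s * (4 - 2 * γ + 8 * α ^ 2 * (α ^ 2 - 1) * (2 * γ - 1))) γ := by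
    intro γ
    have hid : HasDerivAt (fun γ : ℝ => γ) 1 γ := hasDerivAt_id γ
    have h2 : HasDerivAt (fun γ : ℝ => (γ - 2) ^ 2) (2 * (γ - 2)) γ := by
      simpa using (hid.sub_const 2).fun_pow 2
    have hB : HasDerivAt (fun γ : ℝ => 8 * α ^ 2 * s * γ * (γ - 1) * (α ^ 2 - 1))
        ((8 * α ^ 2 * s * 1 * (γ - 1) + 8 * α ^ 2 * s * γ * 1) * (α ^ 2 - 1)) γ := by
      exact ((hid.const_mul (8 * α ^ 2 * s)).mul (hid.sub_const 1)).mul_const (α ^ 2 - 1)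
    have h4 := ((hasDerivAt_const γ (4 * α - 4 * α ^ 3)).sub (h2.const_mul s)).add hB
    have heq : 0 - s * (2 * (γ - 2)) + (8 * α ^ 2 * s * 1 * (γ - 1) + 8 * α ^ 2 * s * γ * 1) * (α ^ 2 - 1)
        = s * (4 - 2 * γ + 8 * α ^ 2 * (α ^ 2 - 1) * (2 * γ - 1)) := by ring
    rw [heq] at h4
    exact h4
  have hnn : ∀ γ ∈ Set.Icc (0 : ℝ) 0.4,
      0 ≤ s * (4 - 2 * γ + 8 * α ^ 2 * (α ^ 2 - 1) * (2 * γ - 1)) := by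
    intro γ hγ
    obtain ⟨hγ0, hγ1⟩ := hγ
    apply mul_nonneg hsnn
    nlinarith [sq_nonneg α, mul_nonneg (mul_nonneg (sq_nonneg α)
      (by nlinarith : (0:ℝ) ≤ 1 - α ^ 2)) (by nlinarith : (0:ℝ) ≤ 1 - 2 * γ)]
  have hmono : MonotoneOn (g α) (Set.Icc (0 : ℝ) 0.4) := by
    apply monotoneOn_of_deriv_nonneg (convex_Icc _ _)
      (fun γ _ => (hd γ).continuousAt.continuousWithinAt)
      (fun γ _ => (hd γ).differentiableAt.differentiableWithinAt)
    intro γ hγ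
    rw [interior_Icc] at hγ
    rw [(hd γ).deriv]
    exact hnn γ ⟨le_of_lt hγ.1, le_of_lt hγ.2⟩
  refine ⟨fun γ hγ => ⟨hd γ, hnn γ hγ⟩, hmono, fun γ hγ => ?_⟩
  exact hmono hγ ⟨by norm_num, le_refl _⟩ hγ.2
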